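/- If T_1,...,T_n are nested initial segments: T_j = {1,...,t_j} with m ≥ t_1 ≥ ... ≥ t_n ≥ 1, then M = ∑_j Q_{T_j} satisfies det M = ∏_{i=1}^m a_i, where a_i = #{j : t_j ≥ i}. -/

import Mathlib

open Matrix Finset

noncomputable def indVec (m : ℕ) (T : Finset (Fin m)) : Fin m → ℝ :=
  fun i => if i ∈ T then 1 else 0

noncomputable def Pmat (m : ℕ) (T : Finset (Fin m)) : Matrix (Fin m) (Fin m) ℝ :=
  Matrix.diagonal (indVec m T) - ((T.card : ℝ))⁻¹ • vecMulVec (indVec m T) (indVec m T)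

noncomputable def Qmat (m : ℕ) (T : Finset (Fin m)) : Matrix (Fin m) (Fin m) ℝ :=
  Pmat m T + ((m : ℝ))⁻¹ • Matrix.of (fun _ _ => (1 : ℝ))

noncomputable def Wmat (m : ℕ) : Matrix (Fin m) (Fin m) ℝ :=
  Matrix.of fun k i =>
    if (i : ℕ) = m - 1 then 1
    else if (k : ℕ) ≤ (i : ℕ) then 1
    else if (k : ℕ) = (i : ℕ) + 1 then -(((i : ℕ) : ℝ) + 1) else 0

lemma filter_lt_card (m c : ℕ) (h : c ≤ m) :
    (Finset.univ.filter fun k : Fin m => (k : ℕ) < c).card = c := by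
  have : (Finset.univ.filter fun k : Fin m => (k : ℕ) < c) =
      Finset.map (Fin.castLEEmb h) Finset.univ := by
    ext k
    simp only [mem_filter, mem_univ, true_and, Finset.mem_map, Fin.castLEEmb_apply]
    constructor
    · intro hk; exact ⟨⟨(k : ℕ), hk⟩, by ext; simp⟩
    · rintro ⟨x, -, rfl⟩; simpa using x.2
  rw [this, Finset.card_map, Finset.card_univ, Fintype.card_fin]

lemma sum_ind (m c : ℕ) (h : c ≤ m) :
    ∑ k : Fin m, (if (k : ℕ) < c then (1 : ℝ) else 0) = c := by
  rw [Finset.sum_boole, filter_lt_card m c h]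

lemma sum_single (m c : ℕ) (h : c < m) (v : ℝ) :
    ∑ k : Fin m, (if (k : ℕ) = c then v else 0) = v := by
  have : ∀ k : Fin m, (if (k : ℕ) = c then v else 0) =
      (if k = ⟨c, h⟩ then v else 0) := by
    intro k; congr 1; simp [Fin.ext_iff]
  rw [Finset.sum_congr rfl fun k _ => this k, Finset.sum_ite_eq' Finset.univ]
  simp

lemma sumW (m : ℕ) (i : Fin m) :
    ∑ k, Wmat m k i = if (i : ℕ) = m - 1 then (m : ℝ) else 0 := by
  by_cases hi : (i : ℕ) = m - 1
  · rw [if_pos hi]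
    have : ∀ k : Fin m, Wmat m k i = 1 := by intro k; simp [Wmat, hi]
    rw [Finset.sum_congr rfl fun k _ => this k]
    simp
  · rw [if_neg hi]
    have hi' : (i : ℕ) + 1 < m := by have := i.isLt; omega
    have : ∀ k : Fin m, Wmat m k i =
        (if (k : ℕ) < (i : ℕ) + 1 then (1 : ℝ) else 0) +
        (if (k : ℕ) = (i : ℕ) + 1 then -(((i : ℕ) : ℝ) + 1) else 0) := by
      intro k
      simp only [Wmat, Matrix.of_apply, if_neg hi]
      split_ifs <;> (first | (exfalso; omega) | ring)
    rw [Finset.sum_congr rfl fun k _ => this k, Finset.sum_add_distrib,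
      sum_ind m _ (by omega), sum_single m _ hi']
    push_cast; ring

lemma sumIndW (m t : ℕ) (ht : 1 ≤ t) (htm : t ≤ m) (i : Fin m) :
    ∑ l : Fin m, (if (l : ℕ) < t then (1 : ℝ) else 0) * Wmat m l i =
      if (i : ℕ) = m - 1 then (t : ℝ)
      else if t ≤ (i : ℕ) + 1 then (t : ℝ) else 0 := by
  by_cases hi : (i : ℕ) = m - 1
  · rw [if_pos hi]
    have h1 : ∀ l : Fin m, (if (l : ℕ) < t then (1:ℝ) else 0) * Wmat m l i
        = (if (l : ℕ) < t then (1:ℝ) else 0) := by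
      intro l; simp [Wmat, hi]
    rw [Finset.sum_congr rfl fun l _ => h1 l, sum_ind m t htm]
  · rw [if_neg hi]
    by_cases htc : t ≤ (i : ℕ) + 1
    · rw [if_pos htc]
      have h1 : ∀ l : Fin m, (if (l : ℕ) < t then (1:ℝ) else 0) * Wmat m l i
          = (if (l : ℕ) < t then (1:ℝ) else 0) := by
        intro l
        by_cases hl : (l : ℕ) < t
        · have hw : Wmat m l i = 1 := by
            simp only [Wmat, Matrix.of_apply, if_neg hi]
            rw [if_pos (by omega : (l:ℕ) ≤ (i:ℕ))]
          rw [hw, mul_one]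
        · rw [if_neg hl, zero_mul]
      rw [Finset.sum_congr rfl fun l _ => h1 l, sum_ind m t htm]
    · rw [if_neg htc]
      have h1 : ∀ l : Fin m, (if (l : ℕ) < t then (1:ℝ) else 0) * Wmat m l i
          = Wmat m l i := by
        intro l
        by_cases hl : (l : ℕ) < t
        · rw [if_pos hl, one_mul]
        · rw [if_neg hl, zero_mul]
          simp only [Wmat, Matrix.of_apply, if_neg hi]
          rw [if_neg (by omega), if_neg (by omega)]
      rw [Finset.sum_congr rfl fun l _ => h1 l, sumW, if_neg hi]

lemma QW (m t : ℕ) (hm : 1 ≤ m) (ht : 1 ≤ t) (htm : t ≤ m) :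
    Qmat m (Finset.univ.filter fun i : Fin m => (i : ℕ) < t) * Wmat m =
      Wmat m * Matrix.diagonal (fun i : Fin m =>
        if (i : ℕ) = m - 1 then (1 : ℝ) else if (i : ℕ) + 2 ≤ t then 1 else 0) := by
  have hm0 : (m : ℝ) ≠ 0 := Nat.cast_ne_zero.mpr (by omega)
  have ht0 : (t : ℝ) ≠ 0 := Nat.cast_ne_zero.mpr (by omega)
  set T := Finset.univ.filter fun i : Fin m => (i : ℕ) < t with hTdef
  have hcard : ((T.card : ℝ)) = (t : ℝ) := by
    rw [hTdef, filter_lt_card m t htm]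
  have hind : ∀ k : Fin m, indVec m T k = if (k : ℕ) < t then (1:ℝ) else 0 := by
    intro k; simp [indVec, hTdef]
  ext k i
  rw [Matrix.mul_apply, Matrix.mul_diagonal]
  have expand : ∀ l : Fin m, Qmat m T k l * Wmat m l i =
      (if k = l then indVec m T k * Wmat m l i else 0)
      - (t:ℝ)⁻¹ * (indVec m T k * ((if (l:ℕ) < t then (1:ℝ) else 0) * Wmat m l i))
      + (m:ℝ)⁻¹ * Wmat m l i := by
    intro l
    have hq : Qmat m T k l = (if k = l then indVec m T k else 0)
        - (t:ℝ)⁻¹ * (indVec m T k * indVec m T l) + (m:ℝ)⁻¹ := by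
      simp only [Qmat, Pmat, Matrix.add_apply, Matrix.sub_apply, Matrix.smul_apply,
        Matrix.diagonal_apply, Matrix.vecMulVec_apply, Matrix.of_apply, smul_eq_mul,
        mul_one]
      rw [hcard]
    rw [hq, hind l, add_mul, sub_mul, ite_mul, zero_mul]
    ring
  rw [Finset.sum_congr rfl fun l _ => expand l, Finset.sum_add_distrib,
    Finset.sum_sub_distrib, ← Finset.mul_sum, ← Finset.mul_sum, ← Finset.mul_sum,
    Finset.sum_ite_eq Finset.univ k]
  simp only [Finset.mem_univ, if_pos]
  rw [sumIndW m t ht htm i, sumW m i, hind k]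
  by_cases hi : (i : ℕ) = m - 1
  · rw [if_pos hi, if_pos hi, if_pos hi]
    have hw : Wmat m k i = 1 := by simp [Wmat, hi]
    rw [hw]
    by_cases hk : (k : ℕ) < t
    · rw [if_pos hk]; field_simp; ring
    · rw [if_neg hk]; field_simp; ring
  · rw [if_neg hi, if_neg hi, if_neg hi]
    by_cases htc : t ≤ (i : ℕ) + 1
    · rw [if_pos htc, if_neg (by omega : ¬ (i:ℕ) + 2 ≤ t)]
      by_cases hk : (k : ℕ) < t
      · rw [if_pos hk]
        have hw : Wmat m k i = 1 := by
          simp only [Wmat, Matrix.of_apply, if_neg hi]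
          rw [if_pos (by omega : (k:ℕ) ≤ (i:ℕ))]
        rw [hw]; field_simp; ring
      · rw [if_neg hk]; ring
    · rw [if_neg htc, if_pos (by omega : (i:ℕ) + 2 ≤ t)]
      by_cases hk : (k : ℕ) < t
      · rw [if_pos hk]; ring
      · rw [if_neg hk]
        have hw : Wmat m k i = 0 := by
          simp only [Wmat, Matrix.of_apply, if_neg hi]
          rw [if_neg (by omega), if_neg (by omega)]
        rw [hw]; ring

lemma sumWW_lt (m : ℕ) (i i' : Fin m) (h : (i:ℕ) < (i':ℕ)) :
    ∑ k, Wmat m k i * Wmat m k i' = 0 := by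
  have hi : ¬ (i:ℕ) = m - 1 := by have := i'.isLt; omega
  by_cases hi' : (i':ℕ) = m - 1
  · have h1 : ∀ k : Fin m, Wmat m k i * Wmat m k i' = Wmat m k i := by
      intro k
      have hw : Wmat m k i' = 1 := by simp [Wmat, hi']
      rw [hw, mul_one]
    rw [Finset.sum_congr rfl fun k _ => h1 k, sumW, if_neg hi]
  · have h1 : ∀ k : Fin m, Wmat m k i * Wmat m k i' = Wmat m k i := by
      intro k
      by_cases hk : (k:ℕ) ≤ (i:ℕ) + 1
      · have hw : Wmat m k i' = 1 := by
          simp only [Wmat, Matrix.of_apply, if_neg hi']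
          rw [if_pos (by omega : (k:ℕ) ≤ (i':ℕ))]
        rw [hw, mul_one]
      · have hw : Wmat m k i = 0 := by
          simp only [Wmat, Matrix.of_apply, if_neg hi]
          rw [if_neg (by omega), if_neg (by omega)]
        rw [hw, zero_mul]
    rw [Finset.sum_congr rfl fun k _ => h1 k, sumW, if_neg hi]

lemma WtW (m : ℕ) :
    (Wmat m)ᵀ * Wmat m = Matrix.diagonal (fun i : Fin m =>
      if (i:ℕ) = m - 1 then (m:ℝ) else (((i:ℕ):ℝ)+1) * (((i:ℕ):ℝ)+2)) := by
  ext i i'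
  rw [Matrix.mul_apply]
  simp only [Matrix.transpose_apply]
  rcases lt_trichotomy (i:ℕ) (i':ℕ) with h | h | h
  · rw [Matrix.diagonal_apply_ne _ (by simp only [ne_eq, Fin.ext_iff]; omega),
      sumWW_lt m i i' h]
  · have hii : i = i' := Fin.ext h
    subst hii
    rw [Matrix.diagonal_apply_eq]
    by_cases hi : (i:ℕ) = m - 1
    · rw [if_pos hi]
      have h1 : ∀ k : Fin m, Wmat m k i * Wmat m k i = 1 := by
        intro k; simp [Wmat, hi]
      rw [Finset.sum_congr rfl fun k _ => h1 k]
      simp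
    · rw [if_neg hi]
      have hi' : (i:ℕ) + 1 < m := by have := i.isLt; omega
      have h1 : ∀ k : Fin m, Wmat m k i * Wmat m k i =
          (if (k:ℕ) < (i:ℕ)+1 then (1:ℝ) else 0)
          + (if (k:ℕ) = (i:ℕ)+1 then (((i:ℕ):ℝ)+1)^2 else 0) := by
        intro k
        simp only [Wmat, Matrix.of_apply, if_neg hi]
        split_ifs <;> (first | (exfalso; omega) | ring)
      rw [Finset.sum_congr rfl fun k _ => h1 k, Finset.sum_add_distrib,
        sum_ind m _ (by omega), sum_single m _ hi']
      push_cast; ring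
  · rw [Matrix.diagonal_apply_ne _ (by simp only [ne_eq, Fin.ext_iff]; omega)]
    have h1 : ∀ k : Fin m, Wmat m k i * Wmat m k i' = Wmat m k i' * Wmat m k i :=
      fun k => mul_comm _ _
    rw [Finset.sum_congr rfl fun k _ => h1 k, sumWW_lt m i' i h]

lemma detW_ne (m : ℕ) (hm : 1 ≤ m) : (Wmat m).det ≠ 0 := by
  intro h0
  have h1 : ((Wmat m)ᵀ * Wmat m).det = (Wmat m).det * (Wmat m).det := by
    rw [Matrix.det_mul, Matrix.det_transpose]
  rw [WtW m, Matrix.det_diagonal, h0, mul_zero] at h1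
  have h2 : ∏ i : Fin m,
      (if (i:ℕ) = m - 1 then (m:ℝ) else (((i:ℕ):ℝ)+1) * (((i:ℕ):ℝ)+2)) ≠ 0 := by
    apply Finset.prod_ne_zero_iff.mpr
    intro i _
    split_ifs with h
    · exact Nat.cast_ne_zero.mpr (by omega)
    · positivity
  exact h2 h1

lemma finRotate_val (m : ℕ) (hm : 1 ≤ m) (i : Fin m) :
    ((finRotate m i : Fin m) : ℕ) = if (i:ℕ) = m - 1 then 0 else (i:ℕ) + 1 := by
  obtain ⟨m', rfl⟩ : ∃ m', m = m' + 1 := ⟨m - 1, by omega⟩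
  rw [finRotate_succ_apply, Fin.val_add_one]
  by_cases h : i = Fin.last m'
  · rw [if_pos h, if_pos (by simp [h])]
  · rw [if_neg h, if_neg (by simpa [Fin.ext_iff] using h)]

theorem stmt18 (m n : ℕ) (hm : 1 ≤ m) (hn : 1 ≤ n)
    (t : Fin n → ℕ) (htanti : Antitone t)
    (ht1 : ∀ j, 1 ≤ t j) (htm : ∀ j, t j ≤ m)
    (htop : ∀ j : Fin n, (j : ℕ) = 0 → t j = m)
    (T : Fin n → Finset (Fin m))
    (hT : ∀ j, T j = Finset.univ.filter fun i : Fin m => (i : ℕ) < t j)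
    (M : Matrix (Fin m) (Fin m) ℝ) (hM : M = ∑ j, Qmat m (T j))
    (a : Fin m → ℕ)
    (ha : ∀ i : Fin m, a i = (Finset.univ.filter fun j => (i : ℕ) + 1 ≤ t j).card) :
    M.det = ∏ i, (a i : ℝ) := by
  set σ : Equiv.Perm (Fin m) := finRotate m with hσ
  have key : M * Wmat m = Wmat m * Matrix.diagonal (fun i => (a (σ i) : ℝ)) := by
    rw [hM, Matrix.sum_mul]
    have each : ∀ j, Qmat m (T j) * Wmat m =
        Wmat m * Matrix.diagonal (fun i : Fin m =>
          if ((σ i : Fin m) : ℕ) + 1 ≤ t j then (1:ℝ) else 0) := by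
      intro j
      have hfun : (fun i : Fin m =>
          if (i : ℕ) = m - 1 then (1:ℝ) else if (i : ℕ) + 2 ≤ t j then 1 else 0) =
          (fun i : Fin m => if ((σ i : Fin m) : ℕ) + 1 ≤ t j then (1:ℝ) else 0) := by
        funext i
        rw [hσ, finRotate_val m hm i]
        by_cases hi : (i:ℕ) = m - 1
        · rw [if_pos hi, if_pos hi, if_pos (by have := ht1 j; omega)]
        · rw [if_neg hi, if_neg hi]
      rw [hT j, QW m (t j) hm (ht1 j) (htm j), hfun]
    rw [Finset.sum_congr rfl fun j _ => each j, ← Matrix.mul_sum]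
    congr 1
    ext i i'
    rw [Matrix.sum_apply]
    by_cases hii : i = i'
    · subst hii
      simp only [Matrix.diagonal_apply_eq]
      rw [Finset.sum_boole, ha (σ i)]
    · simp only [Matrix.diagonal_apply_ne _ hii]
      simp [Matrix.diagonal_apply_ne _ hii]
  have hdet := congrArg Matrix.det key
  rw [Matrix.det_mul, Matrix.det_mul, Matrix.det_diagonal] at hdet
  have hprod : ∏ i, (a (σ i) : ℝ) = ∏ i, (a i : ℝ) :=
    Equiv.prod_comp σ fun i => (a i : ℝ)
  have hW := detW_ne m hm
  have hfin : M.det * (Wmat m).det = (∏ i, (a i : ℝ)) * (Wmat m).det := by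
    rw [hdet, ← hprod, mul_comm]
  exact mul_right_cancel₀ hW hfin
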